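/- There exists a finite-rank operator K on ℓ²(ℕ×V₂, m^c), mapping finitely supported functions to finitely supported functions, such that for every finitely supported f : ℕ×V₂ → ℂ: Δ_{G^c}(i A_{G^c} f) − i A_{G^c}(Δ_{G^c} f) = (m₂/2)·(B − (α/m₂))·((β/m₂)·Id − B)·(1 ⊗ P^le) f + K f, where B is the bounded operator on ℓ²(ℕ×V₂, m^c) given by (B f)(x,y) = (1/m₂)·(Δ_{G₁^c} f(·,y))(x) and (1 ⊗ P^le) applies P^le in the second variable. In particular the commutator [Δ_{G^c}, i A_{G^c}], defined on finitely supported functions, extends to a bounded operator on ℓ²(ℕ×V₂, m^c). -/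

import Mathlib

noncomputable section

open Complex
open scoped Classical

/-- The Laplacian of the weighted graph `(E, V, m)`. -/
def lap {V : Type*} (E : V → V → ℝ) (m : V → ℝ) (f : V → ℂ) : V → ℂ :=
  fun x => (1 / (m x : ℂ)) * ∑' y : V, ((E x y : ℝ) : ℂ) * (f x - f y)

/-- Edge weights of the cusp half-line: `E₁^c(n, n+1) = e^{−(2n+1)/2}`. -/
def e1C : ℕ → ℕ → ℝ := fun n k =>
  if k = n + 1 then Real.exp (-((2 * (n : ℝ) + 1) / 2))
  else if n = k + 1 then Real.exp (-((2 * (k : ℝ) + 1) / 2)) else 0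

/-- Weight of the cusp half-line: `m₁^c(n) = e^{−n}`. -/
def m1C : ℕ → ℝ := fun n => Real.exp (-(n : ℝ))

/-- Weight of the cusp: `m^c(x,y) = e^{−x}·m₂`. -/
def mC (V₂ : Type*) (m₂ : ℝ) : ℕ × V₂ → ℝ := fun v => m1C v.1 * m₂

/-- Edge weights of the cusp. -/
def eC {V₂ : Type*} (E₂ : V₂ → V₂ → ℝ) : ℕ × V₂ → ℕ × V₂ → ℝ := fun v w =>
  e1C v.1 w.1 * (if v.2 = w.2 then 1 else 0) + (if v.1 = w.1 then 1 else 0) * E₂ v.2 w.2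

/-- The Laplacian of the finite graph `G₂`. -/
def lap2 {V₂ : Type*} [Fintype V₂] (m₂ : ℝ) (E₂ : V₂ → V₂ → ℝ)
    (g : V₂ → ℂ) : V₂ → ℂ := fun y =>
  (1 / (m₂ : ℂ)) * ∑ y' : V₂, ((E₂ y y' : ℝ) : ℂ) * (g y - g y')

/-- `Δ_{G₂}` as a linear endomorphism of `ℓ²(V₂, m₂)` (realized on
`EuclideanSpace ℂ V₂`; since `m₂` is a constant weight, the Hilbert space
`ℓ²(V₂, m₂)` has the same orthogonality relations). -/
def lap2LM {V₂ : Type*} [Fintype V₂] (m₂ : ℝ) (E₂ : V₂ → V₂ → ℝ) :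
    EuclideanSpace ℂ V₂ →ₗ[ℂ] EuclideanSpace ℂ V₂ where
  toFun g := (WithLp.equiv 2 _).symm (lap2 m₂ E₂ ((WithLp.equiv 2 _) g))
  map_add' := by
    intro a b
    ext y
    simp only [WithLp.equiv_symm_apply, WithLp.equiv_apply, lap2, PiLp.add_apply, PiLp.toLp_apply]
    have h : ∑ y' : V₂, ((E₂ y y' : ℝ) : ℂ) * ((a y + b y) - (a y' + b y'))
        = (∑ y' : V₂, ((E₂ y y' : ℝ) : ℂ) * (a y - a y'))
          + ∑ y' : V₂, ((E₂ y y' : ℝ) : ℂ) * (b y - b y') := by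
      rw [← Finset.sum_add_distrib]
      exact Finset.sum_congr rfl fun y' _ => by ring
    rw [h]
    ring
  map_smul' := by
    intro c a
    ext y
    simp only [WithLp.equiv_symm_apply, WithLp.equiv_apply, lap2, PiLp.smul_apply, PiLp.toLp_apply,
      smul_eq_mul, RingHom.id_apply]
    have h : ∑ y' : V₂, ((E₂ y y' : ℝ) : ℂ) * ((c * a y) - (c * a y'))
        = c * ∑ y' : V₂, ((E₂ y y' : ℝ) : ℂ) * (a y - a y') := by
      rw [Finset.mul_sum]
      exact Finset.sum_congr rfl fun y' _ => by ring
    rw [h]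
    ring

/-- `P^le`: the orthogonal projection of `ℓ²(V₂, m₂)` onto `ker Δ_{G₂}`. -/
def Ple {V₂ : Type*} [Fintype V₂] (m₂ : ℝ) (E₂ : V₂ → V₂ → ℝ)
    (g : V₂ → ℂ) : V₂ → ℂ :=
  (WithLp.equiv 2 _)
    ((Submodule.orthogonalProjectionOnto (LinearMap.ker (lap2LM m₂ E₂))
      ((WithLp.equiv 2 _).symm g) : EuclideanSpace ℂ V₂))

/-- `(A_{m₁} f)(n) = (i/2)·(e^{1/2}(n−1/2)·f(n−1) − e^{−1/2}(n+1/2)·f(n+1))`,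
with `f(−1) = 0`. -/
def aM1 (f : ℕ → ℂ) : ℕ → ℂ := fun n =>
  (I / 2) * (((Real.exp (1 / 2) : ℝ) : ℂ) * ((n : ℂ) - 1 / 2)
      * (if n = 0 then 0 else f (n - 1))
    - ((Real.exp (-(1 / 2)) : ℝ) : ℂ) * ((n : ℂ) + 1 / 2) * f (n + 1))

/-- `A_{G^c} := A_{m₁} ⊗ P^le`. -/
def aGC {V₂ : Type*} [Fintype V₂] (m₂ : ℝ) (E₂ : V₂ → V₂ → ℝ)
    (f : ℕ × V₂ → ℂ) : ℕ × V₂ → ℂ := fun v =>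
  aM1 (fun n => Ple m₂ E₂ (fun y' => f (n, y')) v.2) v.1

/-- `(B f)(x,y) = (1/m₂)·(Δ_{G₁^c} f(·,y))(x)`. -/
def Bop {V₂ : Type*} (m₂ : ℝ) (f : ℕ × V₂ → ℂ) : ℕ × V₂ → ℂ := fun v =>
  (1 / (m₂ : ℂ)) * lap e1C m1C (fun n => f (n, v.2)) v.1

/-- `(1 ⊗ P^le) f`: `P^le` applied in the second variable. -/
def PleT {V₂ : Type*} [Fintype V₂] (m₂ : ℝ) (E₂ : V₂ → V₂ → ℝ)
    (f : ℕ × V₂ → ℂ) : ℕ × V₂ → ℂ := fun v =>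
  Ple m₂ E₂ (fun y' => f (v.1, y')) v.2

/-- `α := e^{1/2} + e^{−1/2} − 2`. -/
def alphaC : ℝ := Real.exp (1 / 2) + Real.exp (-(1 / 2)) - 2

/-- `β := e^{1/2} + e^{−1/2} + 2`. -/
def betaC : ℝ := Real.exp (1 / 2) + Real.exp (-(1 / 2)) + 2

/-- The ℓ²-norm with weight `m`. -/
def nrm {V : Type*} (m : V → ℝ) (f : V → ℂ) : ℝ :=
  Real.sqrt (∑' x : V, m x * ‖f x‖ ^ 2)

/-! ### Auxiliary development for `stmt13` -/

namespace Stmt13Aux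

/-- `a = e^{1/2}` as a complex number. -/
def cA : ℂ := ((Real.exp (1/2) : ℝ) : ℂ)
/-- `b = e^{-1/2}` as a complex number. -/
def cB : ℂ := ((Real.exp (-(1/2)) : ℝ) : ℂ)

lemma cA_ne_zero : cA ≠ 0 := by
  simp [cA, Real.exp_ne_zero]

lemma cB_eq : cB = cA⁻¹ := by
  rw [cA, cB, ← Complex.ofReal_inv, ← Real.exp_neg]

/-- Explicit form of the half-line Laplacian. -/
def D1 (G : ℕ → ℂ) (n : ℕ) : ℂ :=
  if n = 0 then cB * (G 0 - G 1)
  else cA * (G n - G (n-1)) + cB * (G n - G (n+1))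

lemma D1_zero : D1 (fun _ => (0:ℂ)) = fun _ => 0 := by
  funext n; unfold D1; split <;> simp

lemma D1_add (X Y : ℕ → ℂ) (n : ℕ) :
    D1 (fun k => X k + Y k) n = D1 X n + D1 Y n := by
  unfold D1; split <;> ring

lemma D1_sub (X Y : ℕ → ℂ) (n : ℕ) :
    D1 (fun k => X k - Y k) n = D1 X n - D1 Y n := by
  unfold D1; split <;> ring

lemma D1_mul (c : ℂ) (X : ℕ → ℂ) (n : ℕ) :
    D1 (fun k => c * X k) n = c * D1 X n := by
  unfold D1; split <;> ring

lemma aM1_add (X Y : ℕ → ℂ) (n : ℕ) :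
    aM1 (fun k => X k + Y k) n = aM1 X n + aM1 Y n := by
  unfold aM1; split <;> ring

lemma aM1_mul (c : ℂ) (X : ℕ → ℂ) (n : ℕ) :
    aM1 (fun k => c * X k) n = c * aM1 X n := by
  unfold aM1; split <;> ring

/-- `T = i[Δ₁, A]` pointwise, an explicit expression. -/
def TT (G : ℕ → ℂ) (n : ℕ) : ℂ :=
  I * D1 (fun k => aM1 G k) n - I * aM1 (fun k => D1 G k) n

/-- `Q = ½((α+β)Δ₁ − Δ₁² − αβ)` pointwise. -/
def QQ (G : ℕ → ℂ) (n : ℕ) : ℂ :=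
  (1/2) * (((alphaC : ℂ) + (betaC : ℂ)) * D1 G n
    - D1 (fun k => D1 G k) n - (alphaC : ℂ) * (betaC : ℂ) * G n)

lemma alpha_beta_sum : (alphaC : ℂ) + (betaC : ℂ) = 2 * (cA + cB) := by
  unfold alphaC betaC cA cB; push_cast; ring

lemma alpha_beta_mul : (alphaC : ℂ) * (betaC : ℂ) = (cA + cB)^2 - 4 := by
  unfold alphaC betaC cA cB; push_cast; ring

/-- `A_{m₁}` without the factor `i/2`. -/
def SS (G : ℕ → ℂ) (n : ℕ) : ℂ :=
  cA * ((n:ℂ) - 1/2) * (if n = 0 then 0 else G (n-1)) - cB * ((n:ℂ) + 1/2) * G (n+1)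

lemma aM1_eq (G : ℕ → ℂ) (n : ℕ) : aM1 G n = (I/2) * SS G n := by
  unfold aM1 SS cA cB; ring

set_option maxHeartbeats 2000000

lemma TT_eq' (G : ℕ → ℂ) (n : ℕ) :
    TT G n = -(1/2) * (D1 (fun k => SS G k) n - SS (fun k => D1 G k) n) := by
  have hI : (I:ℂ) * I = -1 := Complex.I_mul_I
  unfold TT
  have h1 : (fun k => aM1 G k) = fun k => (I/2) * SS G k := funext (aM1_eq G)
  rw [h1, D1_mul, aM1_eq]
  set X := D1 (fun k => SS G k) n with hX
  set Y := SS (fun k => D1 G k) n with hY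
  linear_combination ((X - Y)/2) * hI

/-- The key generic commutator identity `T = Q` away from the boundary. -/
lemma TT_eq_QQ (G : ℕ → ℂ) (m : ℕ) : TT G (m+2) = QQ G (m+2) := by
  have hab : cA * cB = 1 := by
    rw [cA, cB, ← Complex.ofReal_mul, ← Real.exp_add]; norm_num
  rw [TT_eq']
  unfold QQ
  rw [alpha_beta_sum, alpha_beta_mul]
  unfold SS D1
  norm_num
  simp only [show m+1+1 = m+2 from rfl, show m+2+1 = m+3 from rfl,
    show m+2+1+1 = m+4 from rfl, show m+1-1 = m from rfl, show m+2-1 = m+1 from rfl,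
    show m+3-1 = m+2 from rfl]
  push_cast
  linear_combination (2 * G (m+2)) * hab

/-- Explicit generic form. -/
lemma TT_generic (G : ℕ → ℂ) (m : ℕ) :
    TT G (m+2) = G (m+2) - (cA^2/2) * G m - (cB^2/2) * G (m+4) := by
  have hab : cA * cB = 1 := by
    rw [cA, cB, ← Complex.ofReal_mul, ← Real.exp_add]; norm_num
  rw [TT_eq']
  unfold SS D1
  norm_num
  simp only [show m+1+1 = m+2 from rfl, show m+2+1 = m+3 from rfl,
    show m+2+1+1 = m+4 from rfl, show m+1-1 = m from rfl, show m+2-1 = m+1 from rfl,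
    show m+3-1 = m+2 from rfl]
  push_cast
  linear_combination (G (m+2)) * hab

lemma TT_zero' (G : ℕ → ℂ) :
    TT G 0 = (1/2) * G 0 - (1/4) * G 1 - (cB^2/2) * G 2 := by
  have hab : cA * cB = 1 := by
    rw [cA, cB, ← Complex.ofReal_mul, ← Real.exp_add]; norm_num
  rw [TT_eq']
  unfold SS D1
  norm_num
  push_cast
  linear_combination ((1/2) * G 0 - (1/4) * G 1) * hab

lemma TT_one' (G : ℕ → ℂ) :
    TT G 1 = -(cA^2/4) * G 0 + G 1 - (cB^2/2) * G 3 := by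
  have hab : cA * cB = 1 := by
    rw [cA, cB, ← Complex.ofReal_mul, ← Real.exp_add]; norm_num
  rw [TT_eq']
  unfold SS D1
  norm_num
  push_cast
  linear_combination (G 1) * hab

lemma e1C_diag (n : ℕ) : e1C n n = 0 := by
  unfold e1C
  rw [if_neg (by omega), if_neg (by omega)]

lemma e1C_low (k : ℕ) : e1C (k+1) k = Real.exp (-((k:ℝ)+1)) * Real.exp (1/2) := by
  unfold e1C
  rw [if_neg (by omega), if_pos rfl, ← Real.exp_add]
  congr 1; ring

lemma e1C_up (k : ℕ) : e1C (k+1) (k+2) = Real.exp (-((k:ℝ)+1)) * Real.exp (-(1/2)) := by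
  unfold e1C
  rw [if_pos rfl, ← Real.exp_add]
  push_cast
  congr 1; ring

lemma e1C_01 : e1C 0 1 = Real.exp (-(1/2)) := by
  unfold e1C; norm_num

variable {V₂ : Type*} [Fintype V₂] (m₂ : ℝ) (E₂ : V₂ → V₂ → ℝ) in
lemma eC_mid (n : ℕ) (y y' : V₂) : eC E₂ (n,y) (n,y') = E₂ y y' := by
  simp [eC, e1C_diag]

variable {V₂ : Type*} [Fintype V₂] (m₂ : ℝ) (E₂ : V₂ → V₂ → ℝ) in
lemma eC_low (k : ℕ) (y y' : V₂) : eC E₂ (k+1,y) (k,y')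
    = (Real.exp (-((k:ℝ)+1)) * Real.exp (1/2)) * (if y = y' then 1 else 0) := by
  have h2 : ¬((k+1 : ℕ) = k) := by omega
  simp [eC, e1C_low, h2]

variable {V₂ : Type*} [Fintype V₂] (m₂ : ℝ) (E₂ : V₂ → V₂ → ℝ) in
lemma eC_up01 (y y' : V₂) : eC E₂ (0,y) (1,y')
    = Real.exp (-(1/2)) * (if y = y' then 1 else 0) := by
  have h2 : ¬((0:ℕ) = 1) := by omega
  simp [eC, e1C_01, h2]

variable {V₂ : Type*} [Fintype V₂] (m₂ : ℝ) (E₂ : V₂ → V₂ → ℝ) in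
lemma eC_up (k : ℕ) (y y' : V₂) : eC E₂ (k+1,y) (k+2,y')
    = (Real.exp (-((k:ℝ)+1)) * Real.exp (-(1/2))) * (if y = y' then 1 else 0) := by
  have h2 : ¬((k+1 : ℕ) = k+2) := by omega
  have h3 : e1C (k+1) (k+1+1) = Real.exp (-((k:ℝ)+1)) * Real.exp (-(1/2)) := e1C_up k
  simp [eC, h3, h2]

section Graph

variable {V₂ : Type*} [Fintype V₂] (m₂ : ℝ) (E₂ : V₂ → V₂ → ℝ)

/-- Finite-sum formula for the half-line Laplacian. -/
lemma lap1_eq (g : ℕ → ℂ) (n : ℕ) : lap e1C m1C g n = D1 g n := by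
  unfold lap
  rw [tsum_eq_sum (s := ({n - 1, n + 1} : Finset ℕ)) ?h]
  case h =>
    intro k hk
    simp only [Finset.mem_insert, Finset.mem_singleton] at hk
    push_neg at hk
    have : e1C n k = 0 := by
      unfold e1C
      split_ifs with h1 h2
      · omega
      · omega
      · rfl
    rw [this]; simp
  match n with
  | 0 =>
    have hs : ({0 - 1, 0 + 1} : Finset ℕ) = {0, 1} := rfl
    rw [hs, Finset.sum_pair (by norm_num)]
    have h00 : e1C 0 0 = 0 := by unfold e1C; norm_num
    have h01 : e1C 0 1 = Real.exp (-(1/2)) := by unfold e1C; norm_num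
    have hm : m1C 0 = 1 := by unfold m1C; norm_num
    rw [h00, h01, hm]
    unfold D1 cB
    norm_num
  | (k+1) =>
    have hs : ({k + 1 - 1, k + 1 + 1} : Finset ℕ) = {k, k+2} := rfl
    rw [hs, Finset.sum_pair (by omega)]
    have hlow := e1C_low k
    have hup := e1C_up k
    have hm : m1C (k+1) = Real.exp (-((k:ℝ)+1)) := by unfold m1C; push_cast; ring_nf
    have hE : ((Real.exp (-((k:ℝ)+1)) : ℝ) : ℂ) ≠ 0 := by
      exact_mod_cast Real.exp_ne_zero _
    rw [hlow, hup, hm]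
    unfold D1 cA cB
    rw [if_neg (by omega)]
    push_cast
    simp only [show k+1+1 = k+2 from rfl, show k+1-1 = k from rfl]
    field_simp [Complex.exp_ne_zero]

/-- δ-weighted sum over the finite factor. -/
lemma sum_delta (c : ℝ) (h : V₂ → ℂ) (y : V₂) :
    ∑ y' : V₂, ((c * (if y = y' then (1:ℝ) else 0) : ℝ) : ℂ) * h y' = (c:ℂ) * h y := by
  rw [Finset.sum_eq_single y]
  · simp
  · intro b _ hb
    rw [if_neg (fun hh => hb hh.symm)]
    simp
  · intro hy; exact absurd (Finset.mem_univ y) hy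

/-- Finite-sum decomposition of the cusp Laplacian. -/
lemma lapC_eq (hm₂ : m₂ ≠ 0) (f : ℕ × V₂ → ℂ) (n : ℕ) (y : V₂) :
    lap (eC E₂) (mC V₂ m₂) f (n, y)
      = (1/(m₂:ℂ)) * D1 (fun k => f (k, y)) n
        + ((Real.exp (n:ℝ) : ℝ) : ℂ) * lap2 m₂ E₂ (fun y' => f (n, y')) y := by
  unfold lap
  rw [tsum_eq_sum (s := (({n - 1, n, n + 1} : Finset ℕ) ×ˢ (Finset.univ : Finset V₂))) ?h]
  case h =>
    intro w hw
    obtain ⟨k, y'⟩ := w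
    simp only [Finset.mem_product, Finset.mem_insert, Finset.mem_singleton,
      Finset.mem_univ, and_true] at hw
    push_neg at hw
    obtain ⟨hw1, hw2, hw3⟩ := hw
    have h1 : e1C n k = 0 := by
      unfold e1C
      split_ifs with ha hb
      · omega
      · omega
      · rfl
    have h2 : eC E₂ (n, y) (k, y') = 0 := by
      have hnk : ¬(n = k) := fun hh => hw2 hh.symm
      simp [eC, h1, hnk]
    rw [h2]; simp
  rw [Finset.sum_product]
  match n with
  | 0 =>
    have hs : ({0 - 1, 0, 0 + 1} : Finset ℕ) = {0, 1} := by decide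
    rw [hs, Finset.sum_pair (by norm_num)]
    simp only [eC_mid, eC_up01]
    rw [sum_delta]
    unfold mC m1C lap2 D1 cB
    push_cast [Real.exp_zero]
    norm_num
    ring
  | (k+1) =>
    have hs : ({k + 1 - 1, k + 1, k + 1 + 1} : Finset ℕ) = {k, k+1, k+2} := rfl
    rw [hs, Finset.sum_insert (by simp), Finset.sum_insert (by simp),
      Finset.sum_singleton]
    simp only [eC_low, eC_mid, eC_up]
    rw [sum_delta, sum_delta]
    unfold mC m1C lap2 D1 cA cB
    rw [if_neg (by omega)]
    set S := ∑ y' : V₂, ((E₂ y y' : ℝ):ℂ) * (f (k+1, y) - f (k+1, y')) with hS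
    push_cast
    simp only [show k+1+1 = k+2 from rfl, show k+1-1 = k from rfl]
    have key : Complex.exp (-((k:ℂ)+1)) * Complex.exp ((k:ℂ)+1) = 1 := by
      rw [← Complex.exp_add]
      ring_nf
      exact Complex.exp_zero
    generalize hu1 : Complex.exp (-((k:ℂ)+1)) = u at key ⊢
    generalize hv1 : Complex.exp ((k:ℂ)+1) = v at key ⊢
    have hu : u ≠ 0 := left_ne_zero_of_mul_eq_one key
    have hm : (m₂ : ℂ) ≠ 0 := by exact_mod_cast hm₂
    field_simp
    linear_combination (-S) * key

end Graph

section Proj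

variable {V₂ : Type*} [Fintype V₂] (m₂ : ℝ) (E₂ : V₂ → V₂ → ℝ)

lemma lap2_add (g h : V₂ → ℂ) (x : V₂) :
    lap2 m₂ E₂ (fun y => g y + h y) x = lap2 m₂ E₂ g x + lap2 m₂ E₂ h x := by
  unfold lap2
  rw [← mul_add, ← Finset.sum_add_distrib]
  congr 1
  exact Finset.sum_congr rfl fun y' _ => by ring

lemma lap2_mul (c : ℂ) (g : V₂ → ℂ) (x : V₂) :
    lap2 m₂ E₂ (fun y => c * g y) x = c * lap2 m₂ E₂ g x := by
  unfold lap2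
  simp only [Finset.mul_sum]
  exact Finset.sum_congr rfl fun y' _ => by ring

lemma lap2_sub (g h : V₂ → ℂ) (x : V₂) :
    lap2 m₂ E₂ (fun y => g y - h y) x = lap2 m₂ E₂ g x - lap2 m₂ E₂ h x := by
  unfold lap2
  rw [← mul_sub, ← Finset.sum_sub_distrib]
  congr 1
  exact Finset.sum_congr rfl fun y' _ => by ring

lemma lap2_zero (x : V₂) : lap2 m₂ E₂ (fun _ => (0:ℂ)) x = 0 := by
  unfold lap2; simp

lemma Ple_add (g h : V₂ → ℂ) (z : V₂) :
    Ple m₂ E₂ (fun y => g y + h y) z = Ple m₂ E₂ g z + Ple m₂ E₂ h z := by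
  unfold Ple
  rw [show ((WithLp.equiv 2 (V₂ → ℂ)).symm (fun y => g y + h y))
      = (WithLp.equiv 2 (V₂ → ℂ)).symm g + (WithLp.equiv 2 (V₂ → ℂ)).symm h from rfl,
    map_add]
  rfl

lemma Ple_mul (c : ℂ) (g : V₂ → ℂ) (z : V₂) :
    Ple m₂ E₂ (fun y => c * g y) z = c * Ple m₂ E₂ g z := by
  unfold Ple
  rw [show ((WithLp.equiv 2 (V₂ → ℂ)).symm (fun y => c * g y))
      = c • (WithLp.equiv 2 (V₂ → ℂ)).symm g from rfl,
    map_smul]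
  rfl

lemma Ple_sub (g h : V₂ → ℂ) (z : V₂) :
    Ple m₂ E₂ (fun y => g y - h y) z = Ple m₂ E₂ g z - Ple m₂ E₂ h z := by
  unfold Ple
  rw [show ((WithLp.equiv 2 (V₂ → ℂ)).symm (fun y => g y - h y))
      = (WithLp.equiv 2 (V₂ → ℂ)).symm g - (WithLp.equiv 2 (V₂ → ℂ)).symm h from rfl,
    map_sub]
  rfl

lemma Ple_zero (z : V₂) : Ple m₂ E₂ (fun _ => (0:ℂ)) z = 0 := by
  unfold Ple
  rw [show ((WithLp.equiv 2 (V₂ → ℂ)).symm (fun _ => (0:ℂ)))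
      = (0 : EuclideanSpace ℂ V₂) from rfl, map_zero]
  rfl

/-- `Δ₂ ∘ P = 0`. -/
lemma lap2_Ple (g : V₂ → ℂ) (x : V₂) :
    lap2 m₂ E₂ (fun y => Ple m₂ E₂ g y) x = 0 := by
  have hmem : ((Submodule.orthogonalProjectionOnto (LinearMap.ker (lap2LM m₂ E₂))
      ((WithLp.equiv 2 (V₂ → ℂ)).symm g) : EuclideanSpace ℂ V₂))
        ∈ LinearMap.ker (lap2LM m₂ E₂) :=
    SetLike.coe_mem _
  rw [LinearMap.mem_ker] at hmem
  have := congrFun (congrArg (WithLp.equiv 2 (V₂ → ℂ)) hmem) x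
  exact this

/-- symmetry of `Δ₂` w.r.t. the Euclidean inner product. -/
lemma lap2_symm (hsym : ∀ y y', E₂ y y' = E₂ y' y) (u v : EuclideanSpace ℂ V₂) :
    inner ℂ (lap2LM m₂ E₂ u) v = (inner ℂ u (lap2LM m₂ E₂ v) : ℂ) := by
  simp only [PiLp.inner_apply, RCLike.inner_apply']
  have expandL : ∑ y, (starRingEnd ℂ) (lap2LM m₂ E₂ u y) * v y
      = (1/(m₂:ℂ)) * ∑ y, ∑ y', ((E₂ y y' : ℝ):ℂ)
          * ((starRingEnd ℂ) (u y) * v y - (starRingEnd ℂ) (u y') * v y) := by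
    rw [Finset.mul_sum]
    refine Finset.sum_congr rfl fun y _ => ?_
    have : lap2LM m₂ E₂ u y
        = (1/(m₂:ℂ)) * ∑ y', ((E₂ y y' : ℝ):ℂ) * (u y - u y') := rfl
    rw [this, map_mul, map_sum, Finset.mul_sum, Finset.mul_sum, Finset.sum_mul]
    rw [show (starRingEnd ℂ) (1/(m₂:ℂ)) = 1/(m₂:ℂ) by
      rw [map_div₀, map_one, Complex.conj_ofReal]]
    refine Finset.sum_congr rfl fun y' _ => ?_
    rw [map_mul, map_sub, Complex.conj_ofReal]
    ring
  have expandR : ∑ y, (starRingEnd ℂ) (u y) * lap2LM m₂ E₂ v y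
      = (1/(m₂:ℂ)) * ∑ y, ∑ y', ((E₂ y y' : ℝ):ℂ)
          * ((starRingEnd ℂ) (u y) * v y - (starRingEnd ℂ) (u y) * v y') := by
    rw [Finset.mul_sum]
    refine Finset.sum_congr rfl fun y _ => ?_
    have : lap2LM m₂ E₂ v y
        = (1/(m₂:ℂ)) * ∑ y', ((E₂ y y' : ℝ):ℂ) * (v y - v y') := rfl
    rw [this]
    rw [Finset.mul_sum, Finset.mul_sum, Finset.mul_sum]
    refine Finset.sum_congr rfl fun y' _ => ?_
    ring
  rw [expandL, expandR]
  congr 1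
  have splitL : ∀ w w' : V₂ → ℂ, ∑ y, ∑ y', ((E₂ y y' : ℝ):ℂ) * (w y * v y - w' y' * v y)
      = (∑ y, ∑ y', ((E₂ y y' : ℝ):ℂ) * (w y * v y))
        - ∑ y, ∑ y', ((E₂ y y' : ℝ):ℂ) * (w' y' * v y) := by
    intro w w'
    rw [← Finset.sum_sub_distrib]
    refine Finset.sum_congr rfl fun y _ => ?_
    rw [← Finset.sum_sub_distrib]
    exact Finset.sum_congr rfl fun y' _ => by ring
  have splitR : ∑ y, ∑ y', ((E₂ y y' : ℝ):ℂ)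
        * ((starRingEnd ℂ) (u y) * v y - (starRingEnd ℂ) (u y) * v y')
      = (∑ y, ∑ y', ((E₂ y y' : ℝ):ℂ) * ((starRingEnd ℂ) (u y) * v y))
        - ∑ y, ∑ y', ((E₂ y y' : ℝ):ℂ) * ((starRingEnd ℂ) (u y) * v y') := by
    rw [← Finset.sum_sub_distrib]
    refine Finset.sum_congr rfl fun y _ => ?_
    rw [← Finset.sum_sub_distrib]
    exact Finset.sum_congr rfl fun y' _ => by ring
  rw [splitL (fun y => (starRingEnd ℂ) (u y)) (fun y => (starRingEnd ℂ) (u y)), splitR]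
  congr 1
  rw [Finset.sum_comm]
  refine Finset.sum_congr rfl fun a _ => Finset.sum_congr rfl fun b _ => ?_
  rw [hsym b a]

/-- `P ∘ Δ₂ = 0`. -/
lemma Ple_lap2 (hsym : ∀ y y', E₂ y y' = E₂ y' y) (g : V₂ → ℂ) (x : V₂) :
    Ple m₂ E₂ (fun y => lap2 m₂ E₂ g y) x = 0 := by
  unfold Ple
  have hmem : (WithLp.equiv 2 (V₂ → ℂ)).symm (fun y => lap2 m₂ E₂ g y)
      ∈ (LinearMap.ker (lap2LM m₂ E₂))ᗮ := by
    rw [Submodule.mem_orthogonal]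
    intro w hw
    rw [LinearMap.mem_ker] at hw
    have h1 : (WithLp.equiv 2 (V₂ → ℂ)).symm (fun y => lap2 m₂ E₂ g y)
        = lap2LM m₂ E₂ ((WithLp.equiv 2 (V₂ → ℂ)).symm g) := rfl
    rw [h1, ← lap2_symm m₂ E₂ hsym, hw]
    simp
  rw [Submodule.orthogonalProjectionOnto_apply_of_mem_orthogonal hmem]
  rfl

end Proj

section Comm

variable {V₂ : Type*} [Fintype V₂] (m₂ : ℝ) (E₂ : V₂ → V₂ → ℝ)

/-- `P` commutes with the (real-coefficient) operator `D1` in the first variable. -/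
lemma Ple_D1 (f : ℕ × V₂ → ℂ) (k : ℕ) (y : V₂) :
    Ple m₂ E₂ (fun y' => D1 (fun j => f (j, y')) k) y
      = D1 (fun j => Ple m₂ E₂ (fun y' => f (j, y')) y) k := by
  match k with
  | 0 =>
    have e : ∀ (X : ℕ → ℂ), D1 X 0 = cB * (X 0 - X 1) := fun X => by
      unfold D1; simp
    simp only [e]
    rw [Ple_mul, Ple_sub]
  | (j+1) =>
    have e : ∀ (X : ℕ → ℂ), D1 X (j+1)
        = cA * (X (j+1) - X j) + cB * (X (j+1) - X (j+2)) := fun X => by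
      unfold D1; rw [if_neg (Nat.succ_ne_zero j)]; rfl
    simp only [e]
    rw [Ple_add, Ple_mul, Ple_mul, Ple_sub, Ple_sub]

/-- The commutator formula: `[Δ, iA] f (n,y) = (1/m₂)·T(G_y)(n)`. -/
lemma comm_eq (hm₂ : m₂ ≠ 0) (hsym : ∀ y y', E₂ y y' = E₂ y' y)
    (f : ℕ × V₂ → ℂ) (n : ℕ) (y : V₂) :
    lap (eC E₂) (mC V₂ m₂) (fun w => I * aGC m₂ E₂ f w) (n, y)
        - I * aGC m₂ E₂ (lap (eC E₂) (mC V₂ m₂) f) (n, y)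
      = (1/(m₂:ℂ)) * TT (fun k => Ple m₂ E₂ (fun y' => f (k, y')) y) n := by
  set G := fun k => Ple m₂ E₂ (fun y' => f (k, y')) y with hG
  rw [lapC_eq m₂ E₂ hm₂ _ n y]
  -- the lap2-part of the first term vanishes
  have hfun : (fun y' => (fun w => I * aGC m₂ E₂ f w) (n, y')) = fun y' =>
      (I * (I/2) * (((Real.exp (1/2) : ℝ):ℂ) * ((n:ℂ) - 1/2)))
          * Ple m₂ E₂ (fun y'' => if n = 0 then 0 else f (n-1, y'')) y'
        - (I * (I/2) * (((Real.exp (-(1/2)) : ℝ):ℂ) * ((n:ℂ) + 1/2)))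
          * Ple m₂ E₂ (fun y'' => f (n+1, y'')) y' := by
    funext y'
    show I * aGC m₂ E₂ f (n, y') = _
    unfold aGC aM1
    by_cases hn : n = 0
    · subst hn
      simp only [reduceIte, Nat.cast_zero]
      rw [Ple_zero]
      ring
    · simp only [if_neg hn]
      ring
  have hz : lap2 m₂ E₂ (fun y' => (fun w => I * aGC m₂ E₂ f w) (n, y')) y = 0 := by
    rw [hfun, lap2_sub, lap2_mul, lap2_mul, lap2_Ple, lap2_Ple]
    ring
  rw [hz]
  -- the second term
  have hlapf : (fun k => Ple m₂ E₂ (fun y' => lap (eC E₂) (mC V₂ m₂) f (k, y')) y)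
      = fun k => (1/(m₂:ℂ)) * D1 G k := by
    funext k
    have h1 : (fun y' => lap (eC E₂) (mC V₂ m₂) f (k, y'))
        = fun y' => (1/(m₂:ℂ)) * D1 (fun j => f (j, y')) k
            + ((Real.exp (k:ℝ) : ℝ):ℂ) * lap2 m₂ E₂ (fun y'' => f (k, y'')) y' :=
      funext fun y' => lapC_eq m₂ E₂ hm₂ f k y'
    rw [h1, Ple_add, Ple_mul, Ple_mul, Ple_lap2 m₂ E₂ hsym, Ple_D1]
    rw [hG]
    ring
  have h2 : I * aGC m₂ E₂ (lap (eC E₂) (mC V₂ m₂) f) (n, y)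
      = I * ((1/(m₂:ℂ)) * aM1 (fun k => D1 G k) n) := by
    show I * aM1 (fun k => Ple m₂ E₂ (fun y' => lap (eC E₂) (mC V₂ m₂) f (k, y')) y) n = _
    rw [hlapf, aM1_mul]
  rw [h2]
  have h3 : D1 (fun k => (fun w => I * aGC m₂ E₂ f w) (k, y)) n
      = I * D1 (fun k => aM1 G k) n := by
    have : (fun k => (fun w => I * aGC m₂ E₂ f w) (k, y)) = fun k => I * aM1 G k := rfl
    rw [this, D1_mul]
  rw [h3]
  unfold TT
  ring

/-- The main term of the statement in terms of `Q`. -/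
lemma main_eq (hm₂ : m₂ ≠ 0) (f : ℕ × V₂ → ℂ) (n : ℕ) (y : V₂) :
    ((m₂ : ℂ) / 2) *
        (Bop m₂ (fun w => ((betaC / m₂ : ℝ) : ℂ) * PleT m₂ E₂ f w
            - Bop m₂ (PleT m₂ E₂ f) w) (n, y)
          - ((alphaC / m₂ : ℝ) : ℂ) *
            (((betaC / m₂ : ℝ) : ℂ) * PleT m₂ E₂ f (n, y)
              - Bop m₂ (PleT m₂ E₂ f) (n, y)))
      = (1/(m₂:ℂ)) * QQ (fun k => Ple m₂ E₂ (fun y' => f (k, y')) y) n := by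
  set G := fun k => Ple m₂ E₂ (fun y' => f (k, y')) y with hG
  have hPT : ∀ k, PleT m₂ E₂ f (k, y) = G k := fun k => rfl
  unfold Bop
  simp only [lap1_eq, hPT]
  simp only [D1_sub, D1_mul]
  unfold QQ
  have hm : (m₂ : ℂ) ≠ 0 := by exact_mod_cast hm₂
  push_cast
  field_simp
  ring

/-- Boundary defect. -/
def KK (G : ℕ → ℂ) (n : ℕ) : ℂ := if n ≤ 1 then TT G n - QQ G n else 0

lemma TT_QQ_KK (G : ℕ → ℂ) (n : ℕ) : TT G n = QQ G n + KK G n := by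
  unfold KK
  split
  · ring
  · next h =>
    match n, h with
    | (m+2), _ => rw [TT_eq_QQ]; ring

lemma TT_add (X Y : ℕ → ℂ) (n : ℕ) :
    TT (fun k => X k + Y k) n = TT X n + TT Y n := by
  unfold TT
  have h1 : (fun k => aM1 (fun j => X j + Y j) k) = fun k => aM1 X k + aM1 Y k :=
    funext fun k => aM1_add X Y k
  have h2 : (fun k => D1 (fun j => X j + Y j) k) = fun k => D1 X k + D1 Y k :=
    funext fun k => D1_add X Y k
  rw [h1, h2, D1_add, aM1_add]
  ring

lemma TT_mul (c : ℂ) (X : ℕ → ℂ) (n : ℕ) :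
    TT (fun k => c * X k) n = c * TT X n := by
  unfold TT
  have h1 : (fun k => aM1 (fun j => c * X j) k) = fun k => c * aM1 X k :=
    funext fun k => aM1_mul c X k
  have h2 : (fun k => D1 (fun j => c * X j) k) = fun k => c * D1 X k :=
    funext fun k => D1_mul c X k
  rw [h1, h2, D1_mul, aM1_mul]
  ring

lemma QQ_add (X Y : ℕ → ℂ) (n : ℕ) :
    QQ (fun k => X k + Y k) n = QQ X n + QQ Y n := by
  unfold QQ
  have h2 : (fun k => D1 (fun j => X j + Y j) k) = fun k => D1 X k + D1 Y k :=
    funext fun k => D1_add X Y k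
  rw [h2, D1_add, D1_add]
  ring

lemma QQ_mul (c : ℂ) (X : ℕ → ℂ) (n : ℕ) :
    QQ (fun k => c * X k) n = c * QQ X n := by
  unfold QQ
  have h2 : (fun k => D1 (fun j => c * X j) k) = fun k => c * D1 X k :=
    funext fun k => D1_mul c X k
  rw [h2, D1_mul, D1_mul]
  ring

lemma KK_add (X Y : ℕ → ℂ) (n : ℕ) :
    KK (fun k => X k + Y k) n = KK X n + KK Y n := by
  unfold KK
  split
  · rw [TT_add, QQ_add]; ring
  · ring

lemma KK_mul (c : ℂ) (X : ℕ → ℂ) (n : ℕ) :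
    KK (fun k => c * X k) n = c * KK X n := by
  unfold KK
  split
  · rw [TT_mul, QQ_mul]; ring
  · ring

/-- The finite-rank correction operator. -/
def Kop : (ℕ × V₂ → ℂ) →ₗ[ℂ] (ℕ × V₂ → ℂ) where
  toFun f := fun v => (1/(m₂:ℂ)) * KK (fun k => Ple m₂ E₂ (fun y' => f (k, y')) v.2) v.1
  map_add' f g := by
    funext v
    simp only [Pi.add_apply]
    have hGadd : (fun k => Ple m₂ E₂ (fun y' => f (k, y') + g (k, y')) v.2)
        = fun k => Ple m₂ E₂ (fun y' => f (k, y')) v.2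
            + Ple m₂ E₂ (fun y' => g (k, y')) v.2 :=
      funext fun k => Ple_add m₂ E₂ _ _ v.2
    rw [hGadd, KK_add]
    ring
  map_smul' c f := by
    funext v
    simp only [Pi.smul_apply, smul_eq_mul, RingHom.id_apply]
    have hGmul : (fun k => Ple m₂ E₂ (fun y' => c * f (k, y')) v.2)
        = fun k => c * Ple m₂ E₂ (fun y' => f (k, y')) v.2 :=
      funext fun k => Ple_mul m₂ E₂ c _ v.2
    rw [hGmul, KK_mul]
    ring

lemma Kop_apply (f : ℕ × V₂ → ℂ) (v : ℕ × V₂) :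
    Kop m₂ E₂ f v
      = (1/(m₂:ℂ)) * KK (fun k => Ple m₂ E₂ (fun y' => f (k, y')) v.2) v.1 := rfl

lemma Kop_vanish (f : ℕ × V₂ → ℂ) (v : ℕ × V₂) (hv : ¬ (v.1 ≤ 1)) :
    Kop m₂ E₂ f v = 0 := by
  rw [Kop_apply]
  unfold KK
  rw [if_neg hv]
  ring

end Comm

section Norms

variable {V₂ : Type*} [Fintype V₂] (m₂ : ℝ) (E₂ : V₂ → V₂ → ℝ)

lemma norm_cA : ‖cA‖ = Real.exp (1/2) := by
  rw [cA, Complex.norm_real, Real.norm_eq_abs, abs_of_pos (Real.exp_pos _)]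

lemma norm_cB : ‖cB‖ = Real.exp (-(1/2)) := by
  rw [cB, Complex.norm_real, Real.norm_eq_abs, abs_of_pos (Real.exp_pos _)]

lemma norm_comb3 (c₁ c₂ c₃ x₁ x₂ x₃ : ℂ) :
    ‖c₁*x₁ - c₂*x₂ - c₃*x₃‖ ≤ ‖c₁‖*‖x₁‖ + ‖c₂‖*‖x₂‖ + ‖c₃‖*‖x₃‖ := by
  calc ‖c₁*x₁ - c₂*x₂ - c₃*x₃‖ ≤ ‖c₁*x₁ - c₂*x₂‖ + ‖c₃*x₃‖ := norm_sub_le _ _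
    _ ≤ ‖c₁*x₁‖ + ‖c₂*x₂‖ + ‖c₃*x₃‖ :=
        add_le_add_left (norm_sub_le _ _) _
    _ = ‖c₁‖*‖x₁‖ + ‖c₂‖*‖x₂‖ + ‖c₃‖*‖x₃‖ := by rw [norm_mul, norm_mul, norm_mul]

lemma exp_facts : Real.exp (-1) ≤ 1 ∧ (1:ℝ) ≤ Real.exp 1 := by
  constructor
  · exact Real.exp_le_one_iff.mpr (by norm_num)
  · exact Real.one_le_exp (by norm_num)

lemma norm_cA_sq : ‖cA‖ * ‖cA‖ = Real.exp 1 := by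
  rw [norm_cA, ← Real.exp_add]; norm_num

lemma norm_cB_sq : ‖cB‖ * ‖cB‖ = Real.exp (-1) := by
  rw [norm_cB, ← Real.exp_add]; norm_num

/-- Uniform window bound for ‖T G n‖. -/
lemma TT_bound (G : ℕ → ℂ) (n : ℕ) :
    ‖TT G n‖ ≤ Real.exp 1 *
      (‖G (n-2)‖ + ‖G (n-1)‖ + ‖G n‖ + ‖G (n+1)‖ + ‖G (n+2)‖) := by
  obtain ⟨hb1, he1⟩ := exp_facts
  have hA := norm_cA_sq
  have hB := norm_cB_sq
  have hAn : 0 ≤ ‖cA‖ := norm_nonneg _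
  have hBn : 0 ≤ ‖cB‖ := norm_nonneg _
  match n with
  | 0 =>
    rw [TT_zero']
    refine (norm_comb3 _ _ _ _ _ _).trans ?_
    have e1 : ‖(1/2 : ℂ)‖ = 1/2 := by norm_num
    have e2 : ‖(1/4 : ℂ)‖ = 1/4 := by norm_num
    have e3 : ‖cB^2/2‖ = (‖cB‖*‖cB‖)/2 := by
      rw [norm_div, norm_pow, sq]; norm_num
    rw [e1, e2, e3, hB]
    show _ ≤ Real.exp 1 * (‖G 0‖ + ‖G 0‖ + ‖G 0‖ + ‖G 1‖ + ‖G 2‖)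
    nlinarith [norm_nonneg (G 0), norm_nonneg (G 1), norm_nonneg (G 2)]
  | 1 =>
    have h : TT G 1 = (1:ℂ)*G 1 - (cA^2/4)*G 0 - (cB^2/2)*G 3 := by
      rw [TT_one']; ring
    rw [h]
    refine (norm_comb3 _ _ _ _ _ _).trans ?_
    have e1 : ‖(1 : ℂ)‖ = 1 := by norm_num
    have e2 : ‖cA^2/4‖ = (‖cA‖*‖cA‖)/4 := by
      rw [norm_div, norm_pow, sq]; norm_num
    have e3 : ‖cB^2/2‖ = (‖cB‖*‖cB‖)/2 := by
      rw [norm_div, norm_pow, sq]; norm_num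
    rw [e1, e2, e3, hA, hB]
    show _ ≤ Real.exp 1 * (‖G 0‖ + ‖G 0‖ + ‖G 1‖ + ‖G 2‖ + ‖G 3‖)
    nlinarith [norm_nonneg (G 0), norm_nonneg (G 1), norm_nonneg (G 2),
      norm_nonneg (G 3), Real.exp_pos 1]
  | (m+2) =>
    have h : TT G (m+2) = (1:ℂ)*G (m+2) - (cA^2/2)*G m - (cB^2/2)*G (m+4) := by
      rw [TT_generic]; ring
    rw [h]
    refine (norm_comb3 _ _ _ _ _ _).trans ?_
    have e1 : ‖(1 : ℂ)‖ = 1 := by norm_num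
    have e2 : ‖cA^2/2‖ = (‖cA‖*‖cA‖)/2 := by
      rw [norm_div, norm_pow, sq]; norm_num
    have e3 : ‖cB^2/2‖ = (‖cB‖*‖cB‖)/2 := by
      rw [norm_div, norm_pow, sq]; norm_num
    rw [e1, e2, e3, hA, hB]
    show _ ≤ Real.exp 1 * (‖G m‖ + ‖G (m+1)‖ + ‖G (m+2)‖ + ‖G (m+3)‖ + ‖G (m+4)‖)
    nlinarith [norm_nonneg (G m), norm_nonneg (G (m+1)), norm_nonneg (G (m+2)),
      norm_nonneg (G (m+3)), norm_nonneg (G (m+4)), Real.exp_pos 1]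

lemma proj_apply_norm_le {K : Submodule ℂ (EuclideanSpace ℂ V₂)}
    [K.HasOrthogonalProjection] (u : EuclideanSpace ℂ V₂) (y : V₂) :
    ‖(K.orthogonalProjectionOnto u : EuclideanSpace ℂ V₂) y‖^2 ≤ ∑ y' : V₂, ‖u y'‖^2 := by
  have hle : ‖(K.orthogonalProjectionOnto u : EuclideanSpace ℂ V₂) y‖
      ≤ ‖(K.orthogonalProjectionOnto u : EuclideanSpace ℂ V₂)‖ := by
    rw [EuclideanSpace.norm_eq]
    rw [show ‖(K.orthogonalProjectionOnto u : EuclideanSpace ℂ V₂) y‖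
        = Real.sqrt (‖(K.orthogonalProjectionOnto u : EuclideanSpace ℂ V₂) y‖^2) from
      (Real.sqrt_sq (norm_nonneg _)).symm]
    exact Real.sqrt_le_sqrt (Finset.single_le_sum
      (f := fun j => ‖(K.orthogonalProjectionOnto u : EuclideanSpace ℂ V₂) j‖^2)
      (fun j _ => sq_nonneg _) (Finset.mem_univ y))
  have h3 : ‖(K.orthogonalProjectionOnto u : EuclideanSpace ℂ V₂)‖ ≤ ‖u‖ := by
    calc ‖(K.orthogonalProjectionOnto u : EuclideanSpace ℂ V₂)‖
        ≤ ‖K.orthogonalProjectionOnto‖ * ‖u‖ := (K.orthogonalProjectionOnto).le_opNorm u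
      _ ≤ 1 * ‖u‖ := mul_le_mul_of_nonneg_right (Submodule.orthogonalProjectionOnto_norm_le _)
          (norm_nonneg u)
      _ = ‖u‖ := one_mul _
  have h4 : ‖u‖^2 = ∑ y' : V₂, ‖u y'‖^2 := by
    rw [EuclideanSpace.norm_eq,
      Real.sq_sqrt (Finset.sum_nonneg fun i _ => sq_nonneg _)]
  rw [← h4]
  have h5 := hle.trans h3
  nlinarith [norm_nonneg ((K.orthogonalProjectionOnto u : EuclideanSpace ℂ V₂) y),
    norm_nonneg u]

/-- Pointwise bound for the projection. -/
lemma Ple_norm_sq (g : V₂ → ℂ) (y : V₂) :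
    ‖Ple m₂ E₂ g y‖^2 ≤ ∑ y' : V₂, ‖g y'‖^2 :=
  proj_apply_norm_le ((WithLp.equiv 2 (V₂ → ℂ)).symm g) y

lemma sum_shift_sub (U : ℕ → ℝ) (hU : ∀ k, 0 ≤ U k) (j R : ℕ) :
    ∑ n ∈ Finset.range R, U (n - j) ≤ ((j:ℝ)+1) * ∑ k ∈ Finset.range R, U k := by
  rw [Finset.sum_comp U (fun n => n - j)]
  calc ∑ b ∈ (Finset.range R).image (fun n => n - j),
        ((Finset.range R).filter (fun n => n - j = b)).card • U b
      ≤ ∑ b ∈ (Finset.range R).image (fun n => n - j), ((j:ℝ)+1) * U b := by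
        refine Finset.sum_le_sum fun b _ => ?_
        rw [nsmul_eq_mul]
        refine mul_le_mul_of_nonneg_right ?_ (hU b)
        have hsub : (Finset.range R).filter (fun n => n - j = b) ⊆ Finset.Icc b (b+j) := by
          intro n hn
          simp only [Finset.mem_filter, Finset.mem_range] at hn
          rw [Finset.mem_Icc]
          omega
        have := Finset.card_le_card hsub
        rw [Nat.card_Icc] at this
        have : ((Finset.range R).filter (fun n => n - j = b)).card ≤ j + 1 := by omega
        exact_mod_cast this
    _ = ((j:ℝ)+1) * ∑ b ∈ (Finset.range R).image (fun n => n - j), U b := by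
        rw [Finset.mul_sum]
    _ ≤ ((j:ℝ)+1) * ∑ k ∈ Finset.range R, U k := by
        refine mul_le_mul_of_nonneg_left ?_ (by positivity)
        refine Finset.sum_le_sum_of_subset_of_nonneg ?_ (fun i _ _ => hU i)
        intro b hb
        simp only [Finset.mem_image, Finset.mem_range] at hb ⊢
        omega

lemma sum_shift_add (U : ℕ → ℝ) (hU : ∀ k, 0 ≤ U k) (j R : ℕ) :
    ∑ n ∈ Finset.range R, U (n + j) ≤ ∑ k ∈ Finset.range (R+j), U k := by
  have heq : ∑ n ∈ Finset.range R, U (n + j)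
      = ∑ b ∈ (Finset.range R).image (fun n => n + j), U b :=
    (Finset.sum_image (f := U) (g := fun n => n + j) (s := Finset.range R)
      (fun x _ y _ h => Nat.add_right_cancel (by exact h))).symm
  rw [heq]
  refine Finset.sum_le_sum_of_subset_of_nonneg ?_ (fun i _ _ => hU i)
  intro b hb
  simp only [Finset.mem_image, Finset.mem_range] at hb ⊢
  omega

lemma nrm_eq_sum {V : Type*} (m : V → ℝ) (h : V → ℂ) (s : Finset V)
    (hs : ∀ v ∉ s, h v = 0) :
    nrm m h = Real.sqrt (∑ v ∈ s, m v * ‖h v‖^2) := by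
  unfold nrm
  congr 1
  refine tsum_eq_sum fun v hv => ?_
  rw [hs v hv]
  simp

end Norms

end Stmt13Aux

open Stmt13Aux in
/-- **Commutator formula for the cusp:**
`[Δ_{G^c}, iA_{G^c}] = (m₂/2)(B − α/m₂)((β/m₂)Id − B)(1 ⊗ P^le) + K` with `K` of
finite rank mapping finitely supported functions to finitely supported functions;
in particular the commutator extends to a bounded operator on `ℓ²(ℕ×V₂, m^c)`. -/
theorem stmt13 {V₂ : Type*} [Fintype V₂] (m₂ : ℝ) (hm₂ : 0 < m₂)
    (E₂ : V₂ → V₂ → ℝ) (hsym : ∀ y y', E₂ y y' = E₂ y' y)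
    (hpos : ∀ y y', 0 ≤ E₂ y y') (hdiag : ∀ y, E₂ y y = 0) :
    (∃ K : (ℕ × V₂ → ℂ) →ₗ[ℂ] (ℕ × V₂ → ℂ),
      FiniteDimensional ℂ (LinearMap.range K) ∧
      (∀ f : ℕ × V₂ → ℂ, (Function.support f).Finite →
        (Function.support (K f)).Finite) ∧
      ∀ f : ℕ × V₂ → ℂ, (Function.support f).Finite → ∀ v : ℕ × V₂,
        lap (eC E₂) (mC V₂ m₂) (fun w => I * aGC m₂ E₂ f w) v
            - I * aGC m₂ E₂ (lap (eC E₂) (mC V₂ m₂) f) v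
          = ((m₂ : ℂ) / 2) *
              (Bop m₂ (fun w => ((betaC / m₂ : ℝ) : ℂ) * PleT m₂ E₂ f w
                  - Bop m₂ (PleT m₂ E₂ f) w) v
                - ((alphaC / m₂ : ℝ) : ℂ) *
                  (((betaC / m₂ : ℝ) : ℂ) * PleT m₂ E₂ f v
                    - Bop m₂ (PleT m₂ E₂ f) v))
            + K f v) ∧
    (∃ C > 0, ∀ f : ℕ × V₂ → ℂ, (Function.support f).Finite →
      nrm (mC V₂ m₂) (fun v =>
          lap (eC E₂) (mC V₂ m₂) (fun w => I * aGC m₂ E₂ f w) v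
            - I * aGC m₂ E₂ (lap (eC E₂) (mC V₂ m₂) f) v)
        ≤ C * nrm (mC V₂ m₂) f) := by
  have hm₂' : m₂ ≠ 0 := ne_of_gt hm₂
  constructor
  · -- part 1 : the commutator formula with finite-rank K
    refine ⟨Kop m₂ E₂, ?_, ?_, ?_⟩
    · -- finite rank
      let J : (Fin 2 × V₂ → ℂ) →ₗ[ℂ] (ℕ × V₂ → ℂ) :=
        { toFun := fun u v => if h : v.1 < 2 then u (⟨v.1, h⟩, v.2) else 0
          map_add' := fun a b => by
            funext v
            by_cases h : v.1 < 2
            · simp only [dif_pos h, Pi.add_apply]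
            · simp only [dif_neg h, Pi.add_apply, add_zero]
          map_smul' := fun c a => by
            funext v
            by_cases h : v.1 < 2
            · simp only [dif_pos h, Pi.smul_apply, smul_eq_mul, RingHom.id_apply]
            · simp only [dif_neg h, Pi.smul_apply, smul_eq_mul, RingHom.id_apply, mul_zero] }
      have hle : LinearMap.range (Kop m₂ E₂) ≤ LinearMap.range J := by
        rintro x ⟨f, rfl⟩
        refine ⟨fun p => Kop m₂ E₂ f (p.1.1, p.2), ?_⟩
        funext v
        show (if h : v.1 < 2 then Kop m₂ E₂ f ((⟨v.1, h⟩ : Fin 2).1, v.2) else 0)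
            = Kop m₂ E₂ f v
        by_cases h : v.1 < 2
        · rw [dif_pos h]
        · rw [dif_neg h]
          exact (Kop_vanish m₂ E₂ f v (by omega)).symm
      exact Submodule.finiteDimensional_of_le hle
    · -- K maps everything to finitely supported functions
      intro f _
      apply Set.Finite.subset ((Set.finite_Iic (1:ℕ)).prod Set.finite_univ)
      intro v hv
      refine ⟨?_, trivial⟩
      by_contra h
      exact hv (Kop_vanish m₂ E₂ f v h)
    · -- the commutator identity
      intro f _ v
      obtain ⟨n, y⟩ := v
      rw [comm_eq m₂ E₂ hm₂' hsym f n y, main_eq m₂ E₂ hm₂' f n y, TT_QQ_KK, mul_add]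
      rfl
  · -- part 2 : boundedness
    refine ⟨Real.sqrt (5 * Real.exp 1^2 * Real.exp 2 / m₂^2 * (Fintype.card V₂) * 8) + 1,
      by positivity, ?_⟩
    intro f hf
    set X := fun v : ℕ × V₂ =>
        lap (eC E₂) (mC V₂ m₂) (fun w => I * aGC m₂ E₂ f w) v
          - I * aGC m₂ E₂ (lap (eC E₂) (mC V₂ m₂) f) v with hXdef
    set N := hf.toFinset.sup (fun v => v.1) + 1 with hN
    have hfN : ∀ k (y' : V₂), N ≤ k → f (k, y') = 0 := by
      intro k y' hk
      by_contra hne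
      have h1 : (k, y') ∈ hf.toFinset := hf.mem_toFinset.mpr hne
      have h2 : k ≤ hf.toFinset.sup (fun v : ℕ × V₂ => v.1) :=
        Finset.le_sup (f := fun v : ℕ × V₂ => v.1) h1
      omega
    have hG0 : ∀ (y : V₂) (k : ℕ), N ≤ k → Ple m₂ E₂ (fun y' => f (k, y')) y = 0 := by
      intro y k hk
      rw [show (fun y' => f (k, y')) = (fun _ : V₂ => (0:ℂ)) from
        funext fun y' => hfN k y' hk]
      exact Ple_zero m₂ E₂ y
    have hX : ∀ n (y : V₂), X (n, y)
        = (1/(m₂:ℂ)) * TT (fun k => Ple m₂ E₂ (fun y' => f (k, y')) y) n :=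
      fun n y => comm_eq m₂ E₂ hm₂' hsym f n y
    have hXv : ∀ v : ℕ × V₂,
        v ∉ (Finset.range (N+2) ×ˢ (Finset.univ : Finset V₂)) → X v = 0 := by
      intro v hv
      obtain ⟨n, y⟩ := v
      simp only [Finset.mem_product, Finset.mem_range, Finset.mem_univ, and_true,
        not_lt] at hv
      obtain ⟨m, rfl⟩ : ∃ m, n = m + 2 := ⟨n - 2, by omega⟩
      rw [hX, TT_generic, hG0 y m (by omega), hG0 y (m+2) (by omega),
        hG0 y (m+4) (by omega)]
      simp
    set W : ℕ → ℝ := fun k => ∑ y' : V₂, ‖f (k, y')‖^2 with hW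
    set U : ℕ → ℝ := fun k => Real.exp (-(k:ℝ)) * m₂ * W k with hU
    have hWnn : ∀ k, 0 ≤ W k := fun k => Finset.sum_nonneg fun _ _ => sq_nonneg _
    have hUnn : ∀ k, 0 ≤ U k := fun k =>
      mul_nonneg (mul_nonneg (Real.exp_pos _).le hm₂.le) (hWnn k)
    have hpoint : ∀ n (y : V₂), mC V₂ m₂ (n, y) * ‖X (n, y)‖^2
        ≤ (5 * Real.exp 1^2 * Real.exp 2 / m₂^2)
          * (U (n-2) + U (n-1) + U n + U (n+1) + U (n+2)) := by
      intro n y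
      rw [hX]
      set G : ℕ → ℂ := fun k => Ple m₂ E₂ (fun y' => f (k, y')) y with hGdef
      have hGW : ∀ k, ‖G k‖^2 ≤ W k := fun k => Ple_norm_sq m₂ E₂ _ y
      have hTb := TT_bound G n
      have hTb2 : ‖TT G n‖^2
          ≤ Real.exp 1^2 * 5 * (W (n-2) + W (n-1) + W n + W (n+1) + W (n+2)) := by
        have h5 : (‖G (n-2)‖ + ‖G (n-1)‖ + ‖G n‖ + ‖G (n+1)‖ + ‖G (n+2)‖)^2
            ≤ 5 * (‖G (n-2)‖^2 + ‖G (n-1)‖^2 + ‖G n‖^2 + ‖G (n+1)‖^2 + ‖G (n+2)‖^2) := by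
          nlinarith [sq_nonneg (‖G (n-2)‖ - ‖G (n-1)‖), sq_nonneg (‖G (n-2)‖ - ‖G n‖),
            sq_nonneg (‖G (n-2)‖ - ‖G (n+1)‖), sq_nonneg (‖G (n-2)‖ - ‖G (n+2)‖),
            sq_nonneg (‖G (n-1)‖ - ‖G n‖), sq_nonneg (‖G (n-1)‖ - ‖G (n+1)‖),
            sq_nonneg (‖G (n-1)‖ - ‖G (n+2)‖), sq_nonneg (‖G n‖ - ‖G (n+1)‖),
            sq_nonneg (‖G n‖ - ‖G (n+2)‖), sq_nonneg (‖G (n+1)‖ - ‖G (n+2)‖)]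
        have hs0 : 0 ≤ ‖G (n-2)‖ + ‖G (n-1)‖ + ‖G n‖ + ‖G (n+1)‖ + ‖G (n+2)‖ := by
          positivity
        have hsq : ‖TT G n‖^2
            ≤ (Real.exp 1 * (‖G (n-2)‖ + ‖G (n-1)‖ + ‖G n‖ + ‖G (n+1)‖ + ‖G (n+2)‖))^2 :=
          pow_le_pow_left₀ (norm_nonneg _) hTb 2
        have hWs : ‖G (n-2)‖^2 + ‖G (n-1)‖^2 + ‖G n‖^2 + ‖G (n+1)‖^2 + ‖G (n+2)‖^2
            ≤ W (n-2) + W (n-1) + W n + W (n+1) + W (n+2) := by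
          have := hGW (n-2); have := hGW (n-1); have := hGW n
          have := hGW (n+1); have := hGW (n+2)
          linarith
        nlinarith [sq_nonneg (Real.exp 1), Real.exp_pos 1]
      have hmc : mC V₂ m₂ (n, y) = Real.exp (-(n:ℝ)) * m₂ := rfl
      have hnorm1 : ‖(1/(m₂:ℂ))‖ = 1/m₂ := by
        rw [norm_div, norm_one, Complex.norm_real, Real.norm_eq_abs, abs_of_pos hm₂]
      rw [norm_mul, hnorm1, hmc, mul_pow]
      have hsh : ∀ k : ℕ, k ≤ n + 2 →
          Real.exp (-(n:ℝ)) * W k ≤ Real.exp 2 * (Real.exp (-(k:ℝ)) * W k) := by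
        intro k hk
        have hle : Real.exp (-(n:ℝ)) ≤ Real.exp 2 * Real.exp (-(k:ℝ)) := by
          rw [← Real.exp_add]
          apply Real.exp_le_exp.mpr
          have : (k:ℝ) ≤ (n:ℝ) + 2 := by exact_mod_cast hk
          linarith
        calc Real.exp (-(n:ℝ)) * W k
            ≤ (Real.exp 2 * Real.exp (-(k:ℝ))) * W k :=
              mul_le_mul_of_nonneg_right hle (hWnn k)
          _ = Real.exp 2 * (Real.exp (-(k:ℝ)) * W k) := by ring
      have h2a := hsh (n-2) (by omega)
      have h2b := hsh (n-1) (by omega)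
      have h2c := hsh n (by omega)
      have h2d := hsh (n+1) (by omega)
      have h2e := hsh (n+2) (by omega)
      calc Real.exp (-(n:ℝ)) * m₂ * ((1/m₂)^2 * ‖TT G n‖^2)
          = (Real.exp (-(n:ℝ)) * m₂ * (1/m₂)^2) * ‖TT G n‖^2 := by ring
        _ ≤ (Real.exp (-(n:ℝ)) * m₂ * (1/m₂)^2)
            * (Real.exp 1^2 * 5 * (W (n-2) + W (n-1) + W n + W (n+1) + W (n+2))) :=
              mul_le_mul_of_nonneg_left hTb2 (by positivity)
        _ = (5 * Real.exp 1^2 / m₂) * (Real.exp (-(n:ℝ)) * W (n-2)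
              + Real.exp (-(n:ℝ)) * W (n-1) + Real.exp (-(n:ℝ)) * W n
              + Real.exp (-(n:ℝ)) * W (n+1) + Real.exp (-(n:ℝ)) * W (n+2)) := by
            field_simp
        _ ≤ (5 * Real.exp 1^2 / m₂) * (Real.exp 2 * (Real.exp (-((n-2 : ℕ):ℝ)) * W (n-2))
              + Real.exp 2 * (Real.exp (-((n-1 : ℕ):ℝ)) * W (n-1))
              + Real.exp 2 * (Real.exp (-(n:ℝ)) * W n)
              + Real.exp 2 * (Real.exp (-((n+1 : ℕ):ℝ)) * W (n+1))
              + Real.exp 2 * (Real.exp (-((n+2 : ℕ):ℝ)) * W (n+2))) := by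
            refine mul_le_mul_of_nonneg_left ?_ (by positivity)
            linarith
        _ = (5 * Real.exp 1^2 * Real.exp 2 / m₂^2)
            * (U (n-2) + U (n-1) + U n + U (n+1) + U (n+2)) := by
            rw [hU]
            field_simp
    have hXsum : nrm (mC V₂ m₂) X = Real.sqrt (∑ v ∈
        (Finset.range (N+2) ×ˢ (Finset.univ : Finset V₂)), mC V₂ m₂ v * ‖X v‖^2) :=
      nrm_eq_sum _ _ _ hXv
    have hfsum : nrm (mC V₂ m₂) f = Real.sqrt (∑ v ∈
        (Finset.range (N+4) ×ˢ (Finset.univ : Finset V₂)), mC V₂ m₂ v * ‖f v‖^2) := by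
      refine nrm_eq_sum _ _ _ fun v hv => ?_
      obtain ⟨k, y'⟩ := v
      simp only [Finset.mem_product, Finset.mem_range, Finset.mem_univ, and_true,
        not_lt] at hv
      exact hfN k y' (by omega)
    have hUf : ∑ v ∈ (Finset.range (N+4) ×ˢ (Finset.univ : Finset V₂)),
        mC V₂ m₂ v * ‖f v‖^2 = ∑ k ∈ Finset.range (N+4), U k := by
      rw [Finset.sum_product]
      refine Finset.sum_congr rfl fun k _ => ?_
      show ∑ y' : V₂, mC V₂ m₂ (k, y') * ‖f (k, y')‖ ^ 2
          = Real.exp (-(k:ℝ)) * m₂ * ∑ y' : V₂, ‖f (k, y')‖^2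
      rw [Finset.mul_sum]
      refine Finset.sum_congr rfl fun y' _ => ?_
      have h : mC V₂ m₂ (k, y') = Real.exp (-(k:ℝ)) * m₂ := rfl
      rw [h]
    have hshifts : ∑ n ∈ Finset.range (N+2),
        (U (n-2) + U (n-1) + U n + U (n+1) + U (n+2))
        ≤ 8 * ∑ k ∈ Finset.range (N+4), U k := by
      rw [Finset.sum_add_distrib, Finset.sum_add_distrib, Finset.sum_add_distrib,
        Finset.sum_add_distrib]
      have hsubset : ∀ a b : ℕ, a ≤ b → ∑ k ∈ Finset.range a, U k
          ≤ ∑ k ∈ Finset.range b, U k := fun a b hab =>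
        Finset.sum_le_sum_of_subset_of_nonneg
          (Finset.range_subset_range.mpr hab) (fun i _ _ => hUnn i)
      have h1 : ∑ n ∈ Finset.range (N+2), U (n-2)
          ≤ 3 * ∑ k ∈ Finset.range (N+4), U k := by
        have ha := sum_shift_sub U hUnn 2 (N+2)
        have hb := hsubset (N+2) (N+4) (by omega)
        have hc : (0:ℝ) ≤ ∑ k ∈ Finset.range (N+2), U k :=
          Finset.sum_nonneg fun i _ => hUnn i
        norm_num at ha
        linarith
      have h2 : ∑ n ∈ Finset.range (N+2), U (n-1)
          ≤ 2 * ∑ k ∈ Finset.range (N+4), U k := by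
        have ha := sum_shift_sub U hUnn 1 (N+2)
        have hb := hsubset (N+2) (N+4) (by omega)
        have hc : (0:ℝ) ≤ ∑ k ∈ Finset.range (N+2), U k :=
          Finset.sum_nonneg fun i _ => hUnn i
        norm_num at ha
        linarith
      have h3 : ∑ n ∈ Finset.range (N+2), U n
          ≤ ∑ k ∈ Finset.range (N+4), U k := hsubset (N+2) (N+4) (by omega)
      have h4 : ∑ n ∈ Finset.range (N+2), U (n+1)
          ≤ ∑ k ∈ Finset.range (N+4), U k := by
        have ha := sum_shift_add U hUnn 1 (N+2)
        have hb := hsubset (N+2+1) (N+4) (by omega)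
        linarith
      have h5 : ∑ n ∈ Finset.range (N+2), U (n+2)
          ≤ ∑ k ∈ Finset.range (N+4), U k := by
        have ha := sum_shift_add U hUnn 2 (N+2)
        have hb := hsubset (N+2+2) (N+4) (by omega)
        linarith
      linarith
    have hbig : ∑ v ∈ (Finset.range (N+2) ×ˢ (Finset.univ : Finset V₂)),
        mC V₂ m₂ v * ‖X v‖^2
        ≤ (5 * Real.exp 1^2 * Real.exp 2 / m₂^2 * (Fintype.card V₂) * 8)
          * ∑ v ∈ (Finset.range (N+4) ×ˢ (Finset.univ : Finset V₂)),
              mC V₂ m₂ v * ‖f v‖^2 := by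
      rw [hUf, Finset.sum_product]
      calc ∑ n ∈ Finset.range (N+2), ∑ y : V₂, mC V₂ m₂ (n, y) * ‖X (n, y)‖^2
          ≤ ∑ n ∈ Finset.range (N+2), ∑ _y : V₂,
              (5 * Real.exp 1^2 * Real.exp 2 / m₂^2)
                * (U (n-2) + U (n-1) + U n + U (n+1) + U (n+2)) :=
            Finset.sum_le_sum fun n _ => Finset.sum_le_sum fun y _ => hpoint n y
        _ = (5 * Real.exp 1^2 * Real.exp 2 / m₂^2 * (Fintype.card V₂))
            * ∑ n ∈ Finset.range (N+2),
                (U (n-2) + U (n-1) + U n + U (n+1) + U (n+2)) := by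
            rw [Finset.mul_sum]
            refine Finset.sum_congr rfl fun n _ => ?_
            rw [Finset.sum_const, Finset.card_univ, nsmul_eq_mul]
            ring
        _ ≤ (5 * Real.exp 1^2 * Real.exp 2 / m₂^2 * (Fintype.card V₂))
            * (8 * ∑ k ∈ Finset.range (N+4), U k) :=
            mul_le_mul_of_nonneg_left hshifts (by positivity)
        _ = (5 * Real.exp 1^2 * Real.exp 2 / m₂^2 * (Fintype.card V₂) * 8)
            * ∑ k ∈ Finset.range (N+4), U k := by ring
    have hSf0 : (0:ℝ) ≤ ∑ v ∈ (Finset.range (N+4) ×ˢ (Finset.univ : Finset V₂)),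
        mC V₂ m₂ v * ‖f v‖^2 := by
      refine Finset.sum_nonneg fun v _ => mul_nonneg ?_ (sq_nonneg _)
      have : mC V₂ m₂ v = Real.exp (-(v.1:ℝ)) * m₂ := rfl
      rw [this]
      positivity
    rw [hXsum, hfsum]
    have hB0 : (0:ℝ) ≤ 5 * Real.exp 1^2 * Real.exp 2 / m₂^2 * (Fintype.card V₂) * 8 := by
      positivity
    calc Real.sqrt (∑ v ∈ (Finset.range (N+2) ×ˢ (Finset.univ : Finset V₂)),
          mC V₂ m₂ v * ‖X v‖^2)
        ≤ Real.sqrt ((5 * Real.exp 1^2 * Real.exp 2 / m₂^2 * (Fintype.card V₂) * 8)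
            * ∑ v ∈ (Finset.range (N+4) ×ˢ (Finset.univ : Finset V₂)),
                mC V₂ m₂ v * ‖f v‖^2) := Real.sqrt_le_sqrt hbig
      _ = Real.sqrt (5 * Real.exp 1^2 * Real.exp 2 / m₂^2 * (Fintype.card V₂) * 8)
          * Real.sqrt (∑ v ∈ (Finset.range (N+4) ×ˢ (Finset.univ : Finset V₂)),
              mC V₂ m₂ v * ‖f v‖^2) := Real.sqrt_mul hB0 _
      _ ≤ (Real.sqrt (5 * Real.exp 1^2 * Real.exp 2 / m₂^2 * (Fintype.card V₂) * 8) + 1)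
          * Real.sqrt (∑ v ∈ (Finset.range (N+4) ×ˢ (Finset.univ : Finset V₂)),
              mC V₂ m₂ v * ‖f v‖^2) := by
        have hq1 := Real.sqrt_nonneg
          (5 * Real.exp 1^2 * Real.exp 2 / m₂^2 * (Fintype.card V₂) * 8)
        have hq2 := Real.sqrt_nonneg (∑ v ∈ (Finset.range (N+4) ×ˢ
          (Finset.univ : Finset V₂)), mC V₂ m₂ v * ‖f v‖^2)
        nlinarith
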